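/- Let a be a self-modified ascent sequence with corresponding Fishburn matrix M ∈ RMatrices. Then the dual ascent sequence a* (defined as f_MA applied to the antidiagonal reflection of M) equals the panorama pan(a). -/

import Mathlib

def ascents (l : List ℕ) : ℕ :=
  ((l.zip l.tail).filter (fun p => p.1 < p.2)).length

def IsAscSeq (l : List ℕ) : Prop :=
  l.getD 0 0 = 0 ∧
  ∀ k, k < l.length → 0 < k → l.getD k 0 ≤ ascents (l.take k) + 1

def IsRGF (l : List ℕ) : Prop :=
  l.getD 0 0 = 0 ∧
  ∀ k, k < l.length → ∀ j, l.getD k 0 = j + 1 → ∃ i, i < k ∧ l.getD i 0 = j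

def SelfModified (l : List ℕ) : Prop :=
  IsAscSeq l ∧
  ∀ k, k < l.length → 0 < k →
    l.getD k 0 ≤ l.getD (k - 1) 0 ∨ l.getD k 0 = ascents (l.take k) + 1

def Contains101 (l : List ℕ) : Prop :=
  ∃ i j k, i < j ∧ j < k ∧ k < l.length ∧
    l.getD i 0 = l.getD k 0 ∧ l.getD j 0 < l.getD k 0

def Contains0101 (l : List ℕ) : Prop :=
  ∃ i j k m, i < j ∧ j < k ∧ k < m ∧ m < l.length ∧
    l.getD i 0 = l.getD k 0 ∧ l.getD j 0 = l.getD m 0 ∧ l.getD i 0 < l.getD j 0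

def Contains1010 (l : List ℕ) : Prop :=
  ∃ i j k m, i < j ∧ j < k ∧ k < m ∧ m < l.length ∧
    l.getD i 0 = l.getD k 0 ∧ l.getD j 0 = l.getD m 0 ∧ l.getD j 0 < l.getD i 0

/-- The view of position `i` in the sequence `a`: the number of indices `j > i` such
that `a j` strictly exceeds all entries `a k` for `i ≤ k < j`.  This agrees with the
recursive definition `v i = v j + 1` for `j` the least index `> i` with `a j > a i`. -/
def view {α : Type*} [LinearOrder α] [Inhabited α] (a : List α) (i : ℕ) : ℕ :=
  ((List.range a.length).filter (fun j =>
    decide (i < j ∧ ∀ k, k < j → i ≤ k → a.getD k default < a.getD j default))).length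

/-- The panorama of `a`: the views of the positions of `a`, listed grouped by entry
value from largest value to smallest, positions within a group in increasing order. -/
def pan {α : Type*} [LinearOrder α] [Inhabited α] (a : List α) : List ℕ :=
  ((List.range a.length).mergeSort (fun i j =>
    decide (a.getD j default < a.getD i default ∨
      (a.getD i default = a.getD j default ∧ i ≤ j)))).map (view a)

/-- A square matrix of natural numbers, given by a dimension and an entry function
(indices are 0-based; entries with an index `≥ d` are irrelevant/zero). -/
structure FMat where
  d : ℕ
  entry : ℕ → ℕ → ℕ

/-- 0-based index of the first row whose rightmost entry is nonzero. -/
noncomputable def mindex (M : FMat) : ℕ :=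
  sInf {i | M.entry i (M.d - 1) ≠ 0}

/-- One step of the recursive bijection from ascent sequences to Fishburn matrices,
with cases AM1, AM2, AM3 (0-based indices). -/
noncomputable def fStep (M : FMat) (a : ℕ) : FMat :=
  if a ≤ mindex M then
    -- AM1: increase entry (a, d-1)
    ⟨M.d, fun i j => M.entry i j + if i = a ∧ j = M.d - 1 then 1 else 0⟩
  else if a = M.d then
    -- AM2: append a new row and column, with 1 in the new diagonal entry
    ⟨M.d + 1, fun i j =>
      if i = M.d ∨ j = M.d then (if i = M.d ∧ j = M.d then 1 else 0)
      else M.entry i j⟩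
  else
    -- AM3: insert a new row and column at index a
    ⟨M.d + 1, fun i j =>
      if i = a then (if j = M.d then 1 else 0)
      else if j = a then (if i < a then M.entry i (M.d - 1) else 0)
      else if j = M.d ∧ i < a then 0
      else M.entry (if i < a then i else i - 1) (if j < a then j else j - 1)⟩

/-- The map from ascent sequences to Fishburn matrices. -/
noncomputable def fAM (l : List ℕ) : FMat :=
  l.tail.foldl fStep ⟨1, fun i j => if i = 0 ∧ j = 0 then 1 else 0⟩

/-- Fishburn matrix: upper triangular (and supported on `[0,d) × [0,d)`),
with no zero row and no zero column. -/
def IsFishburn (M : FMat) : Prop :=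
  (∀ i j, (M.d ≤ i ∨ M.d ≤ j ∨ j < i) → M.entry i j = 0) ∧
  (∀ i, i < M.d → ∃ j, j < M.d ∧ M.entry i j ≠ 0) ∧
  (∀ j, j < M.d → ∃ i, i < M.d ∧ M.entry i j ≠ 0)

def entrySum (M : FMat) : ℕ :=
  ∑ i ∈ Finset.range M.d, ∑ j ∈ Finset.range M.d, M.entry i j

/-- Reflection of a matrix through its antidiagonal. -/
def reflect (M : FMat) : FMat :=
  ⟨M.d, fun i j => if i < M.d ∧ j < M.d then M.entry (M.d - 1 - j) (M.d - 1 - i) else 0⟩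

/-- The canonical sequence `(0^{m₀₀}, 1^{m₁₁}, 0^{m₀₁}, 2^{m₂₂}, 1^{m₁₂}, 0^{m₀₂}, …)`
(0-based indices) associated to a matrix; this is `f_MA(M)` for `M ∈ RMatrices`. -/
def canonSeq (M : FMat) : List ℕ :=
  (List.range M.d).flatMap (fun j =>
    (List.range (j + 1)).reverse.flatMap (fun i => List.replicate (M.entry i j) i))

/-- The dual canonical sequence
`(0^{m_{d-1,d-1}}, 1^{m_{d-2,d-2}}, 0^{m_{d-2,d-1}}, …, (d-1)^{m_{0,0}}, …, 0^{m_{0,d-1}})`,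
i.e. `f_MA` applied to the antidiagonal reflection of `M`. -/
def dualCanonSeq (M : FMat) : List ℕ :=
  (List.range M.d).flatMap (fun j =>
    (List.range (j + 1)).reverse.flatMap (fun i =>
      List.replicate (M.entry (M.d - 1 - j) (M.d - 1 - i)) i))

/-- A matrix is SE-free if it has no pair of nonzero entries `m i j`, `m i' j'`
with `i < i'`, `j < j'` and `i' ≤ j`. -/
def SEFree (M : FMat) : Prop :=
  ¬ ∃ i j i' j', i < i' ∧ j < j' ∧ i' ≤ j ∧ j' < M.d ∧
    M.entry i j ≠ 0 ∧ M.entry i' j' ≠ 0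

/-- Generalized ballot sequence (Yamanouchi word): in every prefix, each value `j+1`
occurs at most as often as `j`. -/
def IsBallot (l : List ℕ) : Prop :=
  ∀ k j, (l.take k).count (j + 1) ≤ (l.take k).count j

namespace DualPan
open List

def RMat (M : FMat) : Prop :=
  0 < M.d ∧ (∀ i j, (M.d ≤ i ∨ M.d ≤ j ∨ j < i) → M.entry i j = 0) ∧
  ∀ i, i < M.d → 0 < M.entry i i

/-- one "column block": values `d-1, d-2, …, 0` with multiplicities `f i`. -/
def col (f : ℕ → ℕ) (d : ℕ) : List ℕ :=
  (List.range d).reverse.flatMap (fun i => List.replicate (f i) i)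

lemma col_succ (f : ℕ → ℕ) (d : ℕ) :
    col f (d + 1) = List.replicate (f d) d ++ col f d := by
  simp [col, List.range_succ]

lemma col_zero_of (f : ℕ → ℕ) (d : ℕ) (h : ∀ i < d, f i = 0) : col f d = [] := by
  induction d with
  | zero => rfl
  | succ d ih =>
    rw [col_succ, h d (by omega), ih (fun i hi => h i (by omega))]
    rfl

lemma count_col (f : ℕ → ℕ) (d v : ℕ) :
    (col f d).count v = if v < d then f v else 0 := by
  induction d with
  | zero => simp [col]
  | succ d ih =>
    rw [col_succ, List.count_append, ih, List.count_replicate]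
    rcases Nat.lt_trichotomy v d with h | h | h
    · rw [if_pos h, if_pos (show v < d + 1 by omega),
        if_neg (show ¬((d == v) = true) by simp; omega)]
      omega
    · subst h; simp
    · rw [if_neg (show ¬ v < d by omega), if_neg (show ¬ v < d + 1 by omega),
        if_neg (show ¬((d == v) = true) by simp; omega)]

lemma mem_col {f : ℕ → ℕ} {d x : ℕ} (h : x ∈ col f d) : x < d := by
  simp only [col, List.mem_flatMap, List.mem_reverse, List.mem_range] at h
  obtain ⟨i, hi, hx⟩ := h
  rw [List.eq_of_mem_replicate hx]; exact hi

lemma col_ne_nil {f : ℕ → ℕ} {d q : ℕ} (hq : q < d) (hf : f q ≠ 0) : col f d ≠ [] := by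
  intro h
  have := count_col f d q
  rw [h, if_pos hq] at this
  simp at this; omega

lemma pairwise_col (f : ℕ → ℕ) (d : ℕ) :
    List.Pairwise (fun x y => y ≤ x) (col f d) := by
  induction d with
  | zero => simp [col]
  | succ d ih =>
    rw [col_succ, List.pairwise_append]
    refine ⟨by simp [List.pairwise_replicate], ih, ?_⟩
    intro a ha b hb
    rw [List.eq_of_mem_replicate ha]
    exact le_of_lt (mem_col hb)

lemma head_col {f : ℕ → ℕ} {d : ℕ} (hf : f d ≠ 0) :
    (col f (d + 1)).getD 0 0 = d := by
  rw [col_succ]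
  have : f d = (f d - 1) + 1 := by omega
  rw [this, List.replicate_succ]
  rfl

lemma getLast?_col {f : ℕ → ℕ} {q : ℕ} : ∀ {d : ℕ}, q < d → f q ≠ 0 → (∀ i < q, f i = 0) →
    (col f d).getLast? = some q := by
  intro d
  induction d with
  | zero => omega
  | succ d ih =>
    intro hq hf h0
    rw [col_succ, List.getLast?_append]
    rcases Nat.lt_or_ge q d with h | h
    · rw [ih h hf h0]; rfl
    · have hqd : q = d := by omega
      subst hqd
      rw [col_zero_of f q h0]
      simp [List.getLast?_replicate, hf]

lemma col_append {f : ℕ → ℕ} {d x : ℕ} (hx : x < d) (h0 : ∀ i < x, f i = 0) :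
    col (fun i => f i + if i = x then 1 else 0) d = col f d ++ [x] := by
  induction d with
  | zero => omega
  | succ d ih =>
    rcases Nat.lt_or_ge x d with h | h
    · rw [col_succ, col_succ, ih h, if_neg (by omega)]
      simp
    · have hxd : x = d := by omega
      subst hxd
      rw [col_succ, col_succ, if_pos rfl, col_zero_of _ x h0,
        col_zero_of (fun i => f i + if i = x then 1 else 0) x
          (fun i hi => by show f i + (if i = x then 1 else 0) = 0; rw [h0 i hi, if_neg (by omega)])]
      simp [List.replicate_succ']

/-! ### blocks of `canonSeq` -/

def blk (M : FMat) (j : ℕ) : List ℕ := col (fun i => M.entry i j) (j + 1)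

lemma canonSeq_eq (M : FMat) : canonSeq M = (List.range M.d).flatMap (blk M) := rfl

variable {M : FMat}

lemma blk_ne_nil (hM : RMat M) {j : ℕ} (hj : j < M.d) : blk M j ≠ [] :=
  col_ne_nil (Nat.lt_succ_self j) (by have := hM.2.2 j hj; omega)

lemma blk_head (hM : RMat M) {j : ℕ} (hj : j < M.d) : (blk M j).getD 0 0 = j :=
  head_col (by have := hM.2.2 j hj; omega)

lemma blk_le {j x : ℕ} (h : x ∈ blk M j) : x ≤ j := by
  have := mem_col h; omega

lemma blk_count (hM : RMat M) {v j : ℕ} (hv : v < M.d) (hj : j < M.d) :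
    (blk M j).count v = M.entry v j := by
  rw [blk, count_col]
  rcases Nat.lt_or_ge v (j+1) with h | h
  · rw [if_pos h]
  · rw [if_neg (by omega), hM.2.1 v j (by omega)]

lemma blk_pairwise (j : ℕ) : List.Pairwise (fun x y => y ≤ x) (blk M j) :=
  pairwise_col _ _

/-! ### offsets -/

def off (M : FMat) (c : ℕ) : ℕ := ((List.range c).flatMap (blk M)).length

@[simp] lemma off_zero : off M 0 = 0 := rfl

lemma off_succ (c : ℕ) : off M (c + 1) = off M c + (blk M c).length := by
  rw [off, off, List.range_succ, List.flatMap_append, List.length_append,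
    List.flatMap_singleton]

lemma off_lt (hM : RMat M) {c : ℕ} (hc : c < M.d) : off M c < off M (c + 1) := by
  rw [off_succ]
  have := List.length_pos_iff.mpr (blk_ne_nil hM hc)
  omega

lemma off_mono (hM : RMat M) {c c' : ℕ} (h : c ≤ c') (h' : c' ≤ M.d) :
    off M c ≤ off M c' := by
  induction c' with
  | zero => have : c = 0 := by omega
            rw [this]
  | succ c' ih =>
    rcases Nat.lt_or_ge c (c'+1) with hh | hh
    · have h1 := ih (by omega) (by omega)
      have h2 := off_lt hM (show c' < M.d by omega)
      omega
    · have : c = c' + 1 := by omega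
      rw [this]

lemma off_strict (hM : RMat M) {c c' : ℕ} (h : c < c') (h' : c' ≤ M.d) :
    off M c < off M c' := by
  have h1 := off_lt hM (show c < M.d by omega)
  have h2 := off_mono hM (show c + 1 ≤ c' by omega) h'
  omega

lemma length_canonSeq : (canonSeq M).length = off M M.d := rfl

lemma canon_decomp {c : ℕ} (hc : c ≤ M.d) :
    canonSeq M = (List.range c).flatMap (blk M) ++
      (List.range' c (M.d - c)).flatMap (blk M) := by
  rw [canonSeq_eq, ← List.flatMap_append]
  congr 1
  rw [List.range_eq_range', List.range_eq_range']
  have := List.range'_append (s := 0) (m := c) (n := M.d - c) (step := 1)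
  simp only [Nat.one_mul, Nat.zero_add] at this
  rw [this, Nat.add_sub_cancel' hc]

lemma getD_below (hM : RMat M) {c k : ℕ} (hc : c ≤ M.d) (hk : k < off M c) :
    (canonSeq M).getD k 0 < c := by
  rw [canon_decomp hc, List.getD_append _ _ _ _ hk]
  have hmem : ((List.range c).flatMap (blk M)).getD k 0 ∈ (List.range c).flatMap (blk M) := by
    rw [List.getD_eq_getElem _ _ hk]
    exact List.getElem_mem hk
  rw [List.mem_flatMap] at hmem
  obtain ⟨j, hj, hx⟩ := hmem
  rw [List.mem_range] at hj
  have := blk_le hx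
  omega

lemma getD_blk (hM : RMat M) {c t : ℕ} (hc : c < M.d) (ht : t < (blk M c).length) :
    (canonSeq M).getD (off M c + t) 0 = (blk M c).getD t 0 := by
  rw [canon_decomp (le_of_lt hc)]
  have hd : M.d - c = (M.d - c - 1) + 1 := by omega
  rw [hd, List.range'_succ, List.flatMap_cons,
    List.getD_append_right _ _ _ _ (by rw [off]; omega)]
  rw [off]
  rw [Nat.add_sub_cancel_left]
  exact List.getD_append _ _ _ _ ht

lemma getD_off (hM : RMat M) {c : ℕ} (hc : c < M.d) :
    (canonSeq M).getD (off M c) 0 = c := by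
  have h0 : 0 < (blk M c).length := List.length_pos_iff.mpr (blk_ne_nil hM hc)
  have := getD_blk hM hc h0
  rw [Nat.add_zero] at this
  rw [this, blk_head hM hc]

lemma within_block (hM : RMat M) {c k k' : ℕ} (hc : c < M.d)
    (h1 : off M c ≤ k) (h2 : k ≤ k') (h3 : k' < off M (c + 1)) :
    (canonSeq M).getD k' 0 ≤ (canonSeq M).getD k 0 := by
  have hlen : off M (c+1) = off M c + (blk M c).length := off_succ c
  have ht : k - off M c < (blk M c).length := by omega
  have ht' : k' - off M c < (blk M c).length := by omega
  have e1 : (canonSeq M).getD k 0 = (blk M c).getD (k - off M c) 0 := by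
    have := getD_blk hM hc ht
    rwa [Nat.add_sub_cancel' h1] at this
  have e2 : (canonSeq M).getD k' 0 = (blk M c).getD (k' - off M c) 0 := by
    have := getD_blk hM hc ht'
    rwa [Nat.add_sub_cancel' (by omega : off M c ≤ k')] at this
  rw [e1, e2, List.getD_eq_getElem _ _ ht, List.getD_eq_getElem _ _ ht']
  rcases Nat.eq_or_lt_of_le h2 with h | h
  · subst h; exact le_refl _
  · exact (List.pairwise_iff_getElem.mp (blk_pairwise c)) _ _ ht ht' (by omega)

lemma rangeSplit (hM : RMat M) : ∀ {c : ℕ}, c ≤ M.d →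
    List.range (off M c) =
      (List.range c).flatMap (fun c' => List.range' (off M c') ((blk M c').length)) := by
  intro c
  induction c with
  | zero => simp
  | succ c ih =>
    intro hc
    rw [List.range_succ, List.flatMap_append, ← ih (by omega), List.flatMap_singleton,
      off_succ]
    have h2 := List.range'_append (s := 0) (m := off M c) (n := (blk M c).length) (step := 1)
    simp only [Nat.one_mul, Nat.zero_add] at h2
    rw [List.range_eq_range' (n := off M c + (blk M c).length),
      List.range_eq_range' (n := off M c), ← h2]

lemma filter_flatMap' {α β : Type} (l : List α) (f : α → List β) (p : β → Bool) :
    (l.flatMap f).filter p = l.flatMap (fun x => (f x).filter p) := by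
  induction l with
  | nil => rfl
  | cons x l ih => simp [List.flatMap_cons, List.filter_append, ih]

lemma flatMap_single {α β : Type} (l : List α) (g : α → β) :
    l.flatMap (fun x => [g x]) = l.map g := by
  induction l with
  | nil => rfl
  | cons x l ih => simp [List.flatMap_cons, ih]

/-! ### views -/

lemma view_eq (hM : RMat M) {c i : ℕ} (hc : c < M.d)
    (h1 : off M c ≤ i) (h2 : i < off M (c + 1)) :
    view (canonSeq M) i = M.d - 1 - c := by
  have hd0 : (default : ℕ) = 0 := rfl
  rw [view]
  simp only [hd0]
  rw [length_canonSeq, rangeSplit hM (le_refl M.d), filter_flatMap']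
  have key : ∀ c' ∈ List.range M.d,
      (List.range' (off M c') ((blk M c').length)).filter
        (fun j => decide (i < j ∧ ∀ k, k < j → i ≤ k →
          (canonSeq M).getD k 0 < (canonSeq M).getD j 0))
        = if c < c' then [off M c'] else [] := by
    intro c' hc'
    rw [List.mem_range] at hc'
    have hoff : off M (c' + 1) = off M c' + (blk M c').length := off_succ c'
    have hbpos : 0 < (blk M c').length := List.length_pos_iff.mpr (blk_ne_nil hM hc')
    by_cases hcc : c < c'
    · rw [if_pos hcc]
      have hsplit : List.range' (off M c') ((blk M c').length)
          = off M c' :: List.range' (off M c' + 1) ((blk M c').length - 1) := by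
        rw [show (blk M c').length = ((blk M c').length - 1) + 1 by omega, List.range'_succ]
        simp
      rw [hsplit, List.filter_cons]
      have hpoff : (decide (i < off M c' ∧ ∀ k, k < off M c' → i ≤ k →
          (canonSeq M).getD k 0 < (canonSeq M).getD (off M c') 0)) = true := by
        simp only [decide_eq_true_eq]
        refine ⟨lt_of_lt_of_le h2 (off_mono hM (by omega) (by omega)), ?_⟩
        intro k hk _
        rw [getD_off hM hc']
        exact getD_below hM (le_of_lt hc') hk
      rw [if_pos hpoff]
      congr 1
      rw [List.filter_eq_nil_iff]
      intro j hj
      rw [List.mem_range'] at hj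
      obtain ⟨t, ht, hjt⟩ := hj
      simp only [decide_eq_true_eq, not_and]
      intro hij hall
      have h4 := hall (j - 1) (by omega) (by omega)
      have hw := within_block hM hc' (show off M c' ≤ j - 1 by omega)
        (show j - 1 ≤ j by omega) (show j < off M (c' + 1) by omega)
      omega
    · rw [if_neg hcc, List.filter_eq_nil_iff]
      intro j hj
      rw [List.mem_range'] at hj
      obtain ⟨t, ht, hjt⟩ := hj
      simp only [decide_eq_true_eq, not_and]
      intro hij hall
      rcases Nat.lt_or_ge c' c with hlt | hge
      · have hb1 : j < off M (c' + 1) := by omega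
        have hb2 : off M (c' + 1) ≤ off M c := off_mono hM (by omega) (by omega)
        omega
      · have hcc' : c' = c := by omega
        subst hcc'
        have h4 := hall (j - 1) (by omega) (by omega)
        have hw := within_block hM hc' (show off M c' ≤ j - 1 by omega)
          (show j - 1 ≤ j by omega) (show j < off M (c' + 1) by omega)
        omega
  rw [List.flatMap_congr key]
  have hsplit2 : List.range M.d = List.range (c + 1) ++ List.range' (c + 1) (M.d - (c + 1)) := by
    rw [List.range_eq_range', List.range_eq_range' (n := c + 1)]
    have h2' := List.range'_append (s := 0) (m := c + 1) (n := M.d - (c + 1)) (step := 1)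
    simp only [Nat.one_mul, Nat.zero_add] at h2'
    rw [h2', Nat.add_sub_cancel' (by omega)]
  rw [hsplit2, List.flatMap_append]
  have left0 : (List.range (c + 1)).flatMap
      (fun c' => if c < c' then [off M c'] else []) = [] := by
    rw [List.flatMap_eq_nil_iff]
    intro x hx
    rw [List.mem_range] at hx
    rw [if_neg (by omega)]
  have right : (List.range' (c + 1) (M.d - (c + 1))).flatMap
      (fun c' => if c < c' then [off M c'] else [])
      = (List.range' (c + 1) (M.d - (c + 1))).map (off M) := by
    rw [← flatMap_single]
    apply List.flatMap_congr
    intro x hx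
    rw [List.mem_range'] at hx
    obtain ⟨t, ht, hxt⟩ := hx
    rw [if_pos (by omega)]
  rw [left0, List.nil_append, right, List.length_map, List.length_range']
  omega

/-! ### groups -/

lemma length_filter_range_getD (B : List ℕ) (v : ℕ) :
    ((List.range B.length).filter (fun t => decide (B.getD t 0 = v))).length = B.count v := by
  induction B using List.reverseRecOn with
  | nil => simp
  | append_singleton B x ih =>
    rw [List.length_append, List.length_singleton, List.range_succ, List.filter_append,
      List.length_append, List.count_append]
    congr 1
    · rw [← ih]
      congr 1
      apply List.filter_congr
      intro t ht
      rw [List.mem_range] at ht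
      rw [List.getD_append _ _ _ _ ht]
    · rw [List.filter_singleton]
      have hx : (B ++ [x]).getD B.length 0 = x := by
        rw [List.getD_append_right _ _ _ _ (le_refl _), Nat.sub_self]
        rfl
      rw [hx]
      by_cases h : x = v
      · subst h; simp
      · simp [h, List.count_singleton]

lemma map_view_group (hM : RMat M) {v : ℕ} (hv : v < M.d) :
    ((List.range (canonSeq M).length).filter
        (fun i => decide ((canonSeq M).getD i 0 = v))).map (view (canonSeq M))
      = (List.range M.d).flatMap (fun c => List.replicate (M.entry v c) (M.d - 1 - c)) := by
  rw [length_canonSeq, rangeSplit hM (le_refl M.d), filter_flatMap', List.map_flatMap]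
  apply List.flatMap_congr
  intro c hcm
  rw [List.mem_range] at hcm
  have hoff := off_succ (M := M) c
  have hconst : ∀ j ∈ (List.range' (off M c) ((blk M c).length)).filter
      (fun i => decide ((canonSeq M).getD i 0 = v)),
      view (canonSeq M) j = M.d - 1 - c := by
    intro j hj
    have hj' := List.mem_of_mem_filter hj
    rw [List.mem_range'] at hj'
    obtain ⟨t, ht, hjt⟩ := hj'
    exact view_eq hM hcm (by omega) (by omega)
  rw [List.map_congr_left hconst, List.map_const']
  have hlen : ((List.range' (off M c) ((blk M c).length)).filter
      (fun i => decide ((canonSeq M).getD i 0 = v))).length = M.entry v c := by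
    rw [List.range'_eq_map_range, List.filter_map, List.length_map]
    have hcongr : ∀ t ∈ List.range ((blk M c).length),
        ((fun i => decide ((canonSeq M).getD i 0 = v)) ∘ (fun x => off M c + x)) t
          = (fun t => decide ((blk M c).getD t 0 = v)) t := by
      intro t ht
      rw [List.mem_range] at ht
      simp only [Function.comp_apply]
      rw [getD_blk hM hcm ht]
    rw [List.filter_congr hcongr, length_filter_range_getD, blk_count hM hv hcm]
  rw [hlen]

/-! ### permutation and sortedness -/

lemma perm_flatMap_filter (key : ℕ → ℕ) : ∀ (s l : List ℕ), s.Nodup →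
    (∀ x ∈ l, key x ∈ s) →
    (s.flatMap (fun v => l.filter (fun i => decide (key i = v)))).Perm l := by
  intro s
  induction s with
  | nil =>
    intro l _ h
    have : l = [] := by
      cases l with
      | nil => rfl
      | cons x l => exact absurd (h x (by simp)) (by simp)
    rw [this]
    simp
  | cons v s ih =>
    intro l hnd h
    rw [List.flatMap_cons]
    have hstep : ∀ v' ∈ s, l.filter (fun i => decide (key i = v'))
        = (l.filter (fun i => !decide (key i = v))).filter (fun i => decide (key i = v')) := by
      intro v' hv'
      rw [List.filter_filter]
      apply List.filter_congr
      intro x hx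
      have hne : v' ≠ v := by
        rintro rfl
        exact (List.nodup_cons.mp hnd).1 hv'
      by_cases hk : key x = v'
      · simp [hk, hne]
      · simp [hk]
    have e1 : s.flatMap (fun v' => l.filter (fun i => decide (key i = v')))
        = s.flatMap (fun v' => (l.filter (fun i => !decide (key i = v))).filter
            (fun i => decide (key i = v'))) := List.flatMap_congr hstep
    rw [e1]
    have hperm := ih (l.filter (fun i => !decide (key i = v))) (List.nodup_cons.mp hnd).2
      (by
        intro x hx
        have h1 := List.mem_of_mem_filter hx
        have h2 := List.of_mem_filter hx
        have := h x h1
        simp only [Bool.not_eq_true', decide_eq_false_iff_not] at h2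
        cases List.mem_cons.mp this with
        | inl hc => exact absurd hc h2
        | inr hc => exact hc)
    calc l.filter (fun i => decide (key i = v)) ++
          s.flatMap (fun v' => (l.filter (fun i => !decide (key i = v))).filter
            (fun i => decide (key i = v')))
        ~ l.filter (fun i => decide (key i = v)) ++ l.filter (fun i => !decide (key i = v)) :=
            List.Perm.append_left _ hperm
      _ ~ l := List.filter_append_perm _ l

/-! ### pan of canonSeq -/

lemma elem_bound (hM : RMat M) {i : ℕ} (hi : i < (canonSeq M).length) :
    (canonSeq M).getD i 0 < M.d := by
  rw [length_canonSeq] at hi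
  exact getD_below hM (le_refl _) hi

lemma pan_canon_aux (hM : RMat M) :
    pan (canonSeq M) = ((List.range M.d).reverse).flatMap
      (fun v => (List.range M.d).flatMap
        (fun c => List.replicate (M.entry v c) (M.d - 1 - c))) := by
  have hd0 : (default : ℕ) = 0 := rfl
  set n := (canonSeq M).length with hn
  set grp : ℕ → List ℕ := fun v =>
    (List.range n).filter (fun i => decide ((canonSeq M).getD i 0 = v)) with hgrp
  set P : List ℕ := (List.range M.d).reverse.flatMap grp with hP
  have hperm : P.Perm (List.range n) := by
    apply perm_flatMap_filter (fun i => (canonSeq M).getD i 0)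
    · rw [List.nodup_reverse]
      exact List.nodup_range (n := M.d)
    · intro x hx
      rw [List.mem_reverse, List.mem_range]
      rw [List.mem_range] at hx
      exact elem_bound hM hx
  have hpairP : List.Pairwise (fun i j => (canonSeq M).getD j 0 < (canonSeq M).getD i 0 ∨
      ((canonSeq M).getD i 0 = (canonSeq M).getD j 0 ∧ i ≤ j)) P := by
    rw [hP, List.flatMap_def, List.pairwise_flatten]
    constructor
    · intro l hl
      rw [List.mem_map] at hl
      obtain ⟨v, hv, rfl⟩ := hl
      have hpw : List.Pairwise (· < ·) (grp v) :=
        (List.pairwise_lt_range (n := n)).filter _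
      apply hpw.imp_of_mem
      intro x y hx hy hxy
      have hx' := List.of_mem_filter hx
      have hy' := List.of_mem_filter hy
      rw [decide_eq_true_eq] at hx' hy'
      right
      exact ⟨by rw [hx', hy'], le_of_lt hxy⟩
    · rw [List.pairwise_map, List.pairwise_reverse]
      apply (List.pairwise_lt_range (n := M.d)).imp_of_mem
      intro v v' _ _ hvv'
      intro x hx y hy
      have hx' := List.of_mem_filter hx
      have hy' := List.of_mem_filter hy
      rw [decide_eq_true_eq] at hx' hy'
      left
      rw [hx', hy']
      exact hvv'
  have hms : (List.range n).mergeSort (fun i j =>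
      decide ((canonSeq M).getD j default < (canonSeq M).getD i default ∨
        ((canonSeq M).getD i default = (canonSeq M).getD j default ∧ i ≤ j))) = P := by
    have hanti : IsAntisymm ℕ (fun i j => (decide ((canonSeq M).getD j default <
        (canonSeq M).getD i default ∨ ((canonSeq M).getD i default =
        (canonSeq M).getD j default ∧ i ≤ j)) = true)) := by
      constructor
      intro a b hab hba
      rw [decide_eq_true_eq] at hab hba
      omega
    apply List.Perm.eq_of_pairwise (fun a b _ _ h1 h2 => hanti.antisymm a b h1 h2)
    rotate_right
    · exact (List.mergeSort_perm _ _).trans hperm.symm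
    · apply List.pairwise_mergeSort
      · intro a b c hab hbc
        rw [decide_eq_true_eq] at hab hbc ⊢
        omega
      · intro a b
        rw [Bool.or_eq_true, decide_eq_true_eq, decide_eq_true_eq]
        omega
    · apply hpairP.imp_of_mem
      intro a b _ _ hr
      rw [decide_eq_true_eq]
      simp only [hd0]
      exact hr
  rw [pan, hms, hP, List.map_flatMap]
  apply List.flatMap_congr
  intro v hv
  rw [List.mem_reverse, List.mem_range] at hv
  exact map_view_group hM hv

lemma pan_canon (hM : RMat M) : pan (canonSeq M) = dualCanonSeq M := by
  rw [pan_canon_aux hM, dualCanonSeq]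
  have hrev : (List.range M.d).reverse = (List.range M.d).map (fun j => M.d - 1 - j) := by
    rw [List.range_eq_range', List.reverse_range', ← List.range_eq_range']
    simp
  rw [hrev, List.flatMap_map]
  apply List.flatMap_congr
  intro j hj
  rw [List.mem_range] at hj
  have hsplit : List.range M.d = List.range (M.d - 1 - j) ++
      List.range' (M.d - 1 - j) (j + 1) := by
    rw [List.range_eq_range', List.range_eq_range' (n := M.d - 1 - j)]
    have h2' := List.range'_append (s := 0) (m := M.d - 1 - j) (n := j + 1) (step := 1)
    simp only [Nat.one_mul, Nat.zero_add] at h2'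
    rw [h2', show M.d - 1 - j + (j + 1) = M.d by omega]
  rw [hsplit, List.flatMap_append]
  have left0 : (List.range (M.d - 1 - j)).flatMap
      (fun c => List.replicate (M.entry (M.d - 1 - j) c) (M.d - 1 - c)) = [] := by
    rw [List.flatMap_eq_nil_iff]
    intro c hc
    rw [List.mem_range] at hc
    rw [hM.2.1 (M.d - 1 - j) c (by omega)]
    rfl
  rw [left0, List.nil_append]
  have hrev2 : (List.range (j + 1)).reverse
      = (List.range (j + 1)).map (fun t => j - t) := by
    rw [List.range_eq_range', List.reverse_range', ← List.range_eq_range']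
    apply List.map_congr_left
    intro t _
    omega
  rw [hrev2, List.flatMap_map,
    List.range'_eq_map_range (s := M.d - 1 - j) (n := j + 1), List.flatMap_map]
  apply List.flatMap_congr
  intro t ht
  rw [List.mem_range] at ht
  rw [show M.d - 1 - (j - t) = M.d - 1 - j + t by omega,
    show j - t = M.d - 1 - (M.d - 1 - j + t) by omega]

/-! ### ascents and prefix lemmas -/

lemma col_congr {f g : ℕ → ℕ} {d : ℕ} (h : ∀ i < d, f i = g i) : col f d = col g d := by
  apply List.flatMap_congr
  intro i hi
  rw [List.mem_reverse, List.mem_range] at hi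
  rw [h i hi]

lemma ascents_cons2 (a b : ℕ) (t : List ℕ) :
    ascents (a :: b :: t) = (if a < b then 1 else 0) + ascents (b :: t) := by
  by_cases h : a < b <;> simp [ascents, h] <;> omega

lemma ascents_concat : ∀ (l : List ℕ), l ≠ [] → ∀ x : ℕ,
    ascents (l ++ [x]) = ascents l + if l.getD (l.length - 1) 0 < x then 1 else 0 := by
  intro l
  induction l with
  | nil => intro h; exact absurd rfl h
  | cons a l ih =>
    intro _ x
    cases l with
    | nil =>
      by_cases h : a < x <;> simp [ascents, h]
    | cons b t =>
      rw [List.cons_append, List.cons_append, ascents_cons2, ascents_cons2,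
        show b :: (t ++ [x]) = (b :: t) ++ [x] from rfl, ih (by simp) x]
      have : (b :: t).getD ((b :: t).length - 1) 0 = (a :: b :: t).getD ((a :: b :: t).length - 1) 0 := by
        simp only [List.length_cons]
        rw [show a :: b :: t = [a] ++ (b :: t) by rfl,
          List.getD_append_right _ _ _ _ (by simp)]
        simp
      rw [this]
      omega

lemma selfModified_prefix {l r : List ℕ} (h : SelfModified (l ++ r)) : SelfModified l := by
  obtain ⟨⟨h0, hasc⟩, hsm⟩ := h
  have hget : ∀ k, k < l.length → (l ++ r).getD k 0 = l.getD k 0 := fun k hk =>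
    List.getD_append _ _ _ _ hk
  have htake : ∀ k, k ≤ l.length → (l ++ r).take k = l.take k := fun k hk =>
    List.take_append_of_le_length hk
  refine ⟨⟨?_, ?_⟩, ?_⟩
  · cases l with
    | nil => rfl
    | cons a l => rwa [hget 0 (by simp)] at h0
  · intro k hk hk0
    have := hasc k (by rw [List.length_append]; omega) hk0
    rwa [hget k hk, htake k (le_of_lt hk)] at this
  · intro k hk hk0
    have := hsm k (by rw [List.length_append]; omega) hk0
    rwa [hget k hk, hget (k - 1) (by omega), htake k (le_of_lt hk)] at this

/-! ### the reconstruction -/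

lemma mindex_eq {M : FMat} {q : ℕ} (hmem : M.entry q (M.d - 1) ≠ 0)
    (hlow : ∀ i < q, M.entry i (M.d - 1) = 0) : mindex M = q := by
  apply Nat.le_antisymm
  · exact Nat.sInf_le (show q ∈ {i | M.entry i (M.d - 1) ≠ 0} from hmem)
  · apply le_csInf ⟨q, hmem⟩
    intro b hb
    by_contra hlt
    push_neg at hlt
    exact hb (hlow b hlt)

lemma entry_zero_of_lt_mindex {M : FMat} {x i : ℕ} (hx : x ≤ mindex M) (hi : i < x) :
    M.entry i (M.d - 1) = 0 := by
  have := Nat.notMem_of_lt_sInf (s := {i | M.entry i (M.d - 1) ≠ 0})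
    (lt_of_lt_of_le hi hx)
  simpa using this

lemma step1 : ∀ (a : List ℕ), SelfModified a → a ≠ [] →
    ∃ M : FMat, RMat M ∧ a = canonSeq M ∧ fAM a = M ∧
      ascents a = M.d - 1 ∧ a.getD (a.length - 1) 0 = mindex M := by
  intro a
  induction a using List.reverseRecOn with
  | nil => intro _ h; exact absurd rfl h
  | append_singleton l x ih =>
    intro hsm _
    cases l with
    | nil =>
      have hx0 : x = 0 := hsm.1.1
      subst hx0
      refine ⟨⟨1, fun i j => if i = 0 ∧ j = 0 then 1 else 0⟩, ?_, ?_, ?_, ?_, ?_⟩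
      · refine ⟨Nat.one_pos, ?_, ?_⟩
        · intro i j hbad
          simp only []
          rw [if_neg]
          rintro ⟨rfl, rfl⟩
          simp at hbad
        · intro i hi
          have hi0 : i = 0 := Nat.lt_one_iff.mp hi
          subst hi0
          simp
      · rfl
      · rfl
      · rfl
      · show (0 : ℕ) = mindex _
        symm
        apply mindex_eq
        · simp
        · intro i hi; omega
    | cons y t =>
      set l : List ℕ := y :: t with hl
      have hlne : l ≠ [] := by simp [hl]
      obtain ⟨M', hR, hcs, hfam, hasc, hlast⟩ := ih (selfModified_prefix hsm) hlne
      have hd'pos : 0 < M'.d := hR.1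
      have hgetx : (l ++ [x]).getD l.length 0 = x := by
        rw [List.getD_append_right _ _ _ _ (le_refl _), Nat.sub_self]
        rfl
      have hcase : x ≤ l.getD (l.length - 1) 0 ∨ x = ascents l + 1 := by
        have h := hsm.2 l.length (by simp) (by simp [hl])
        rw [hgetx, List.getD_append _ _ _ _ (by simp [hl]),
          List.take_append_of_le_length (le_refl _), List.take_length] at h
        exact h
      have hmin : mindex M' = l.getD (l.length - 1) 0 := hlast.symm
      have hminlt : mindex M' ≤ M'.d - 1 := by
        apply Nat.sInf_le
        show M'.entry (M'.d - 1) (M'.d - 1) ≠ 0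
        have := hR.2.2 (M'.d - 1) (by omega)
        omega
      have hfam2 : fAM (l ++ [x]) = fStep M' x := by
        rw [fAM, show (l ++ [x]).tail = l.tail ++ [x] by simp [hl], List.foldl_concat]
        rw [fAM] at hfam
        rw [hfam]
      have hascx := ascents_concat l hlne x
      by_cases hxle : x ≤ l.getD (l.length - 1) 0
      · -- AM1 case
        have hxmin : x ≤ mindex M' := by omega
        have hxlt : x < M'.d := by omega
        set Mn : FMat := ⟨M'.d, fun i j => M'.entry i j +
          if i = x ∧ j = M'.d - 1 then 1 else 0⟩ with hMn
        have hMnd : Mn.d = M'.d := rfl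
        have hMne : ∀ i j, Mn.entry i j = M'.entry i j +
            if i = x ∧ j = M'.d - 1 then 1 else 0 := fun i j => rfl
        have hstep : fStep M' x = Mn := by
          rw [fStep, if_pos hxmin]
        have hzero : ∀ i < x, M'.entry i (M'.d - 1) = 0 := fun i hi =>
          entry_zero_of_lt_mindex hxmin hi
        have e1 : blk Mn (M'.d - 1) = blk M' (M'.d - 1) ++ [x] := by
          rw [blk, blk]
          have : col (fun i => Mn.entry i (M'.d - 1)) (M'.d - 1 + 1)
              = col (fun i => M'.entry i (M'.d - 1) + if i = x then 1 else 0)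
                  (M'.d - 1 + 1) := by
            apply col_congr
            intro i _
            rw [hMne]
            by_cases h : i = x <;> simp [h]
          rw [this]
          exact col_append (by omega) hzero
        refine ⟨Mn, ⟨hd'pos, ?_, ?_⟩, ?_, by rw [hfam2, hstep], ?_, ?_⟩
        · intro i j hbad
          rw [hMnd] at hbad
          rw [hMne, hR.2.1 i j hbad, if_neg, Nat.add_zero]
          rintro ⟨rfl, rfl⟩
          rcases hbad with h | h | h <;> omega
        · intro i hi
          rw [hMnd] at hi
          rw [hMne]
          have := hR.2.2 i hi
          omega
        · -- canonSeq Mn = l ++ [x]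
          rw [hcs, canonSeq_eq, canonSeq_eq, hMnd]
          have hd : M'.d = (M'.d - 1) + 1 := by omega
          rw [hd, List.range_succ, List.flatMap_append, List.flatMap_append,
            List.flatMap_singleton, List.flatMap_singleton, List.append_assoc]
          congr 1
          · apply List.flatMap_congr
            intro j hj
            rw [List.mem_range] at hj
            apply col_congr
            intro i _
            rw [hMne, if_neg (by omega), Nat.add_zero]
          · rw [e1]
        · rw [hascx, if_neg (by omega), hasc, hMnd]
          omega
        · rw [List.length_append, List.length_singleton, Nat.add_sub_cancel, hgetx]
          symm
          apply mindex_eq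
          · rw [hMnd, hMne, if_pos ⟨rfl, rfl⟩]
            omega
          · intro i hi
            rw [hMnd, hMne, hzero i (by omega), if_neg (by omega)]
      · -- AM2 case
        have hxd : x = M'.d := by
          rcases hcase with h | h
          · omega
          · rw [h, hasc]; omega
        set Mn : FMat := ⟨M'.d + 1, fun i j =>
          if i = M'.d ∨ j = M'.d then (if i = M'.d ∧ j = M'.d then 1 else 0)
          else M'.entry i j⟩ with hMn
        have hMnd : Mn.d = M'.d + 1 := rfl
        have hMne : ∀ i j, Mn.entry i j =
            if i = M'.d ∨ j = M'.d then (if i = M'.d ∧ j = M'.d then 1 else 0)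
            else M'.entry i j := fun i j => rfl
        have hstep : fStep M' x = Mn := by
          rw [fStep, if_neg (by omega), if_pos hxd]
        refine ⟨Mn, ⟨by rw [hMnd]; omega, ?_, ?_⟩, ?_, by rw [hfam2, hstep], ?_, ?_⟩
        · intro i j hbad
          rw [hMnd] at hbad
          rw [hMne]
          by_cases hij : i = M'.d ∨ j = M'.d
          · rw [if_pos hij, if_neg]
            rintro ⟨rfl, rfl⟩
            rcases hbad with h | h | h <;> omega
          · rw [if_neg hij]
            push_neg at hij
            apply hR.2.1
            rcases hbad with h | h | h
            · left; omega
            · right; left; omega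
            · right; right; omega
        · intro i hi
          rw [hMnd] at hi
          rw [hMne]
          by_cases hid : i = M'.d
          · rw [if_pos (Or.inl hid), if_pos ⟨hid, hid⟩]
            omega
          · rw [if_neg (by omega)]
            exact hR.2.2 i (by omega)
        · -- canonSeq Mn = l ++ [x]
          rw [hcs, canonSeq_eq, canonSeq_eq, hxd, hMnd]
          rw [List.range_succ, List.flatMap_append, List.flatMap_singleton]
          congr 1
          · apply List.flatMap_congr
            intro j hj
            rw [List.mem_range] at hj
            apply col_congr
            intro i hi
            rw [hMne, if_neg (by omega)]
          · rw [blk, col_succ]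
            have h1 : Mn.entry M'.d M'.d = 1 := by
              rw [hMne, if_pos (Or.inl rfl), if_pos ⟨rfl, rfl⟩]
            have h2 : col (fun i => Mn.entry i M'.d) M'.d = [] := by
              apply col_zero_of
              intro i hi
              rw [hMne, if_pos (Or.inr rfl), if_neg (by omega)]
            rw [h1, h2]
            rfl
        · rw [hascx, if_pos (by omega), hasc, hMnd]
          omega
        · rw [List.length_append, List.length_singleton, Nat.add_sub_cancel, hgetx]
          symm
          apply mindex_eq
          · rw [hMnd, Nat.add_sub_cancel, hMne, hxd,
              if_pos (Or.inl rfl), if_pos ⟨rfl, rfl⟩]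
            omega
          · intro i hi
            rw [hMnd, Nat.add_sub_cancel, hMne, if_pos (Or.inr rfl),
              if_neg (by omega)]

end DualPan

theorem dual_eq_pan (a : List ℕ) (ha : SelfModified a) (hne : a ≠ []) :
    dualCanonSeq (fAM a) = pan a := by
  obtain ⟨M, hR, hcs, hfam, -, -⟩ := DualPan.step1 a ha hne
  rw [hfam, hcs, DualPan.pan_canon hR]
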